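/- Let n ≥ 2 and let (E[k])_{k≥0} be a sequence of edge sets on vertex set {1, …, n} (directed edges, no self-loops). For each k define the n×n matrix P[k] by P[k]_{lj} = 1/(1 + D_j⁺[k]) if l = j or (l, j) ∈ E[k], and P[k]_{lj} = 0 otherwise, where D_j⁺[k] is the number of out-neighbors of j in E[k]. Suppose there exist an integer ℓ ≥ 1 and a strictly increasing sequence of times t₀ = 0 < t₁ < t₂ < … with t_{m+1} − t_m ≤ ℓ for all m, such that for every m the union digraph with edge set E[t_m] ∪ E[t_m + 1] ∪ … ∪ E[t_{m+1} − 1] is strongly connected. Let y and z evolve by y[k+1] = P[k] y[k] and z[k+1] = P[k] z[k] with y[0] = y₀ ∈ ℝⁿ and z[0] = 𝟙. Then z_j[k] > 0 for all j and k, and for every j, y_j[k] / z_j[k] converges as k → ∞ to (Σ_{l=1}^n y₀(l)) / n. -/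

import Mathlib

open Matrix Filter

/-- The out-degree of node `j`: the number of edges `(l, j)` (from `j` to `l`) in `E`. -/
def outDeg {n : ℕ} (E : Finset (Fin n × Fin n)) (j : Fin n) : ℕ :=
  (E.filter fun e => e.2 = j).card

/-- The weight matrix associated with edge set `E`: node `j` puts weight
`1/(1 + D_j⁺)` on its self-link and on each outgoing link `(l, j)`; zero otherwise. -/
noncomputable def degWeights {n : ℕ} (E : Finset (Fin n × Fin n)) : Matrix (Fin n) (Fin n) ℝ :=
  fun l j => if l = j ∨ (l, j) ∈ E then 1 / (1 + (outDeg E j : ℝ)) else 0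

/-- The digraph with edge set `F` (an edge `(l, j)` points from `j` to `l`) is strongly
connected: for every ordered pair of distinct vertices there is a directed path. -/
def StronglyConnected {n : ℕ} (F : Finset (Fin n × Fin n)) : Prop :=
  ∀ i j : Fin n, i ≠ j → Relation.TransGen (fun a b => (b, a) ∈ F) i j

lemma aux_card {n : ℕ} (E : Finset (Fin n × Fin n)) (hns : ∀ e ∈ E, e.1 ≠ e.2) (j : Fin n) :
    (Finset.univ.filter fun l => l = j ∨ (l, j) ∈ E).card = 1 + outDeg E j := by
  have hF : (Finset.univ.filter fun l => (l, j) ∈ E).card = outDeg E j := by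
    rw [outDeg]
    apply Finset.card_bij (fun l _ => (l, j))
    · intro a ha
      simp only [Finset.mem_filter, Finset.mem_univ, true_and] at ha
      exact Finset.mem_filter.mpr ⟨ha, rfl⟩
    · intro a _ b _ h
      exact (Prod.mk.injEq _ _ _ _).mp h |>.1
    · intro e he
      simp only [Finset.mem_filter] at he
      refine ⟨e.1, ?_, ?_⟩
      · simp only [Finset.mem_filter, Finset.mem_univ, true_and]
        rw [show (e.1, j) = e from Prod.ext rfl he.2.symm]
        exact he.1
      · exact Prod.ext rfl he.2.symm
  have heq : (Finset.univ.filter fun l => l = j ∨ (l, j) ∈ E) =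
      insert j (Finset.univ.filter fun l => (l, j) ∈ E) := by
    ext l
    simp only [Finset.mem_filter, Finset.mem_insert, Finset.mem_univ, true_and]
  have hj : j ∉ Finset.univ.filter fun l => (l, j) ∈ E := by
    simp only [Finset.mem_filter, Finset.mem_univ, true_and]
    intro h
    exact hns _ h rfl
  rw [heq, Finset.card_insert_of_notMem hj, hF, Nat.add_comm]

lemma deg_le {n : ℕ} (E : Finset (Fin n × Fin n)) (hns : ∀ e ∈ E, e.1 ≠ e.2) (j : Fin n) :
    1 + outDeg E j ≤ n := by
  rw [← aux_card E hns j]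
  have := Finset.card_filter_le Finset.univ (fun l => l = j ∨ (l, j) ∈ E)
  simpa using this

lemma entry_nonneg {n : ℕ} (E : Finset (Fin n × Fin n)) (l j : Fin n) :
    0 ≤ degWeights E l j := by
  unfold degWeights
  split
  · positivity
  · exact le_refl 0

lemma entry_ge {n : ℕ} (E : Finset (Fin n × Fin n)) (hns : ∀ e ∈ E, e.1 ≠ e.2)
    {l j : Fin n} (h : l = j ∨ (l, j) ∈ E) : (1 : ℝ) / n ≤ degWeights E l j := by
  have hD : (1 + (outDeg E j : ℝ)) ≤ n := by
    have := deg_le E hns j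
    exact_mod_cast this
  have hpos : (0 : ℝ) < 1 + (outDeg E j : ℝ) := by positivity
  unfold degWeights
  rw [if_pos h]
  apply one_div_le_one_div_of_le hpos hD

lemma colsum {n : ℕ} (E : Finset (Fin n × Fin n)) (hns : ∀ e ∈ E, e.1 ≠ e.2) (j : Fin n) :
    ∑ l, degWeights E l j = 1 := by
  unfold degWeights
  rw [Finset.sum_ite, Finset.sum_const_zero, add_zero, Finset.sum_const, aux_card E hns j,
    nsmul_eq_mul]
  have hpos : (0 : ℝ) < 1 + (outDeg E j : ℝ) := by positivity
  push_cast
  field_simp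

section prop
variable {n : ℕ} {E : ℕ → Finset (Fin n × Fin n)} {u : ℕ → Fin n → ℝ}

lemma step_nonneg (hu : ∀ k, u (k + 1) = (degWeights (E k)).mulVec (u k))
    (k : ℕ) (hk : ∀ j, 0 ≤ u k j) : ∀ j, 0 ≤ u (k + 1) j := by
  intro j
  rw [hu, Matrix.mulVec, dotProduct]
  exact Finset.sum_nonneg fun l _ => mul_nonneg (entry_nonneg _ _ _) (hk l)

lemma nonneg_propagate (hu : ∀ k, u (k + 1) = (degWeights (E k)).mulVec (u k))
    {a b : ℕ} (hab : a ≤ b) (ha : ∀ j, 0 ≤ u a j) : ∀ j, 0 ≤ u b j := by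
  induction b, hab using Nat.le_induction with
  | base => exact ha
  | succ b _ ih => exact step_nonneg hu b ih

lemma step_ge (hns : ∀ k, ∀ e ∈ E k, e.1 ≠ e.2)
    (hu : ∀ k, u (k + 1) = (degWeights (E k)).mulVec (u k))
    (k : ℕ) (hk : ∀ j, 0 ≤ u k j) {j l : Fin n} (h : j = l ∨ (j, l) ∈ E k) :
    (1 / n : ℝ) * u k l ≤ u (k + 1) j := by
  rw [hu, Matrix.mulVec, dotProduct]
  have h1 : (1 / n : ℝ) * u k l ≤ degWeights (E k) j l * u k l :=
    mul_le_mul_of_nonneg_right (entry_ge (E k) (hns k) h) (hk l)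
  refine h1.trans ?_
  exact Finset.single_le_sum (f := fun l' => degWeights (E k) j l' * u k l')
    (fun l' _ => mul_nonneg (entry_nonneg _ _ _) (hk l')) (Finset.mem_univ l)

lemma diag_pow (hns : ∀ k, ∀ e ∈ E k, e.1 ≠ e.2)
    (hu : ∀ k, u (k + 1) = (degWeights (E k)).mulVec (u k))
    (d a : ℕ) (ha : ∀ j, 0 ≤ u a j) (j : Fin n) :
    (1 / n : ℝ) ^ d * u a j ≤ u (a + d) j := by
  induction d with
  | zero => simp
  | succ d ih =>
    have hnn : ∀ j', 0 ≤ u (a + d) j' := nonneg_propagate hu (Nat.le_add_right a d) ha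
    have h1 : (1 / n : ℝ) * u (a + d) j ≤ u (a + d + 1) j :=
      step_ge hns hu (a + d) hnn (Or.inl rfl)
    have h2 : (1 / n : ℝ) * ((1 / n : ℝ) ^ d * u a j) ≤ (1 / n : ℝ) * u (a + d) j :=
      mul_le_mul_of_nonneg_left ih (by positivity)
    calc (1 / n : ℝ) ^ (d + 1) * u a j = (1 / n : ℝ) * ((1 / n : ℝ) ^ d * u a j) := by ring
      _ ≤ u (a + d + 1) j := h2.trans h1

lemma diag_pow' (hns : ∀ k, ∀ e ∈ E k, e.1 ≠ e.2)
    (hu : ∀ k, u (k + 1) = (degWeights (E k)).mulVec (u k))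
    {a b : ℕ} (hab : a ≤ b) (ha : ∀ j, 0 ≤ u a j) (j : Fin n) :
    (1 / n : ℝ) ^ (b - a) * u a j ≤ u b j := by
  have := diag_pow hns hu (b - a) a ha j
  rwa [Nat.add_sub_cancel' hab] at this

lemma edge_pow (hns : ∀ k, ∀ e ∈ E k, e.1 ≠ e.2)
    (hu : ∀ k, u (k + 1) = (degWeights (E k)).mulVec (u k))
    {a s b : ℕ} (has : a ≤ s) (hsb : s < b) {j l : Fin n} (he : (j, l) ∈ E s)
    (ha : ∀ j, 0 ≤ u a j) :
    (1 / n : ℝ) ^ (b - a) * u a l ≤ u b j := by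
  have hq : (0:ℝ) ≤ 1 / n := by positivity
  have hs : ∀ j', 0 ≤ u s j' := nonneg_propagate hu has ha
  have hs1 : ∀ j', 0 ≤ u (s + 1) j' := step_nonneg hu s hs
  have h1 : (1 / n : ℝ) ^ (s - a) * u a l ≤ u s l := diag_pow' hns hu has ha l
  have h2 : (1 / n : ℝ) * u s l ≤ u (s + 1) j := step_ge hns hu s hs (Or.inr he)
  have h3 : (1 / n : ℝ) ^ (b - (s + 1)) * u (s + 1) j ≤ u b j := diag_pow' hns hu hsb hs1 j
  have hexp : b - a = (b - (s + 1)) + (1 + (s - a)) := by omega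
  rw [hexp, pow_add, pow_add, pow_one]
  calc (1 / ↑n : ℝ) ^ (b - (s + 1)) * ((1 / ↑n) * (1 / ↑n) ^ (s - a)) * u a l
      = (1 / ↑n : ℝ) ^ (b - (s + 1)) * ((1 / ↑n) * ((1 / ↑n) ^ (s - a) * u a l)) := by ring
    _ ≤ (1 / ↑n : ℝ) ^ (b - (s + 1)) * ((1 / ↑n) * u s l) := by
        apply mul_le_mul_of_nonneg_left (mul_le_mul_of_nonneg_left h1 hq) (by positivity)
    _ ≤ (1 / ↑n : ℝ) ^ (b - (s + 1)) * u (s + 1) j := by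
        apply mul_le_mul_of_nonneg_left h2 (by positivity)
    _ ≤ u b j := h3
end prop

lemma frontier_edge {n : ℕ} {F : Finset (Fin n × Fin n)} {S : Finset (Fin n)} {l j : Fin n}
    (h : Relation.TransGen (fun a b => (b, a) ∈ F) l j) (hl : l ∈ S) (hj : j ∉ S) :
    ∃ a ∈ S, ∃ b, b ∉ S ∧ (b, a) ∈ F := by
  revert hj
  induction h with
  | single hr => exact fun hj => ⟨l, hl, _, hj, hr⟩
  | @tail b c h1 hr ih =>
    intro hj
    by_cases hb : b ∈ S
    · exact ⟨b, hb, c, hj, hr⟩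
    · exact ih hb

section window
variable {n : ℕ} {E : ℕ → Finset (Fin n × Fin n)} {t : ℕ → ℕ} {ℓ : ℕ} {u : ℕ → Fin n → ℝ}

lemma window_grow (hns : ∀ k, ∀ e ∈ E k, e.1 ≠ e.2)
    (htmono : StrictMono t) (htℓ : ∀ m, t (m + 1) - t m ≤ ℓ)
    (hsc : ∀ m, StronglyConnected ((Finset.Ico (t m) (t (m + 1))).biUnion E))
    (hu : ∀ k, u (k + 1) = (degWeights (E k)).mulVec (u k))
    (m : ℕ) {c : ℝ} (hc : 0 ≤ c) {S : Finset (Fin n)} (hSne : S.Nonempty)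
    (hS : ∀ a ∈ S, c ≤ u (t m) a) (hpos : ∀ j, 0 ≤ u (t m) j) :
    ∃ S' : Finset (Fin n), S'.Nonempty ∧ min (S.card + 1) n ≤ S'.card ∧
      ∀ a ∈ S', (1 / n : ℝ) ^ ℓ * c ≤ u (t (m + 1)) a := by
  have hq0 : (0:ℝ) ≤ 1 / n := by positivity
  have hq1 : (1 / n : ℝ) ≤ 1 := by
    rcases Nat.eq_zero_or_pos n with h | h
    · simp [h]
    · rw [div_le_one (by exact_mod_cast h)]; exact_mod_cast h
  have hlt : t m < t (m + 1) := htmono (Nat.lt_succ_self m)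
  have hgap : t (m + 1) - t m ≤ ℓ := htℓ m
  have hpowle : (1 / n : ℝ) ^ ℓ ≤ (1 / n : ℝ) ^ (t (m + 1) - t m) :=
    pow_le_pow_of_le_one hq0 hq1 hgap
  have base : ∀ a ∈ S, (1 / n : ℝ) ^ ℓ * c ≤ u (t (m + 1)) a := by
    intro a ha
    have h1 := diag_pow' hns hu hlt.le hpos a
    calc (1 / n : ℝ) ^ ℓ * c ≤ (1 / n : ℝ) ^ (t (m + 1) - t m) * c :=
          mul_le_mul_of_nonneg_right hpowle hc
      _ ≤ (1 / n : ℝ) ^ (t (m + 1) - t m) * u (t m) a :=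
          mul_le_mul_of_nonneg_left (hS a ha) (by positivity)
      _ ≤ u (t (m + 1)) a := h1
  by_cases hSu : S = Finset.univ
  · refine ⟨S, hSne, ?_, base⟩
    have : S.card = n := by rw [hSu]; simp
    omega
  · obtain ⟨j, hj⟩ : ∃ j, j ∉ S := by
      by_contra h
      push_neg at h
      exact hSu (Finset.eq_univ_of_forall h)
    obtain ⟨l, hl⟩ := hSne
    have hne : l ≠ j := fun h => hj (h ▸ hl)
    obtain ⟨a, haS, b, hbS, hab⟩ := frontier_edge (hsc m l j hne) hl hj
    obtain ⟨s, hs, hes⟩ := Finset.mem_biUnion.mp hab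
    rw [Finset.mem_Ico] at hs
    have hedge : (1 / n : ℝ) ^ (t (m + 1) - t m) * u (t m) a ≤ u (t (m + 1)) b :=
      edge_pow hns hu hs.1 hs.2 hes hpos
    refine ⟨insert b S, ⟨b, Finset.mem_insert_self b S⟩, ?_, ?_⟩
    · rw [Finset.card_insert_of_notMem hbS]
      omega
    · intro a' ha'
      rcases Finset.mem_insert.mp ha' with h | h
      · subst h
        calc (1 / n : ℝ) ^ ℓ * c ≤ (1 / n : ℝ) ^ (t (m + 1) - t m) * c :=
              mul_le_mul_of_nonneg_right hpowle hc
          _ ≤ (1 / n : ℝ) ^ (t (m + 1) - t m) * u (t m) a :=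
              mul_le_mul_of_nonneg_left (hS a haS) (by positivity)
          _ ≤ u (t (m + 1)) a' := hedge
      · exact base a' h

lemma mixing (hn : 2 ≤ n) (hns : ∀ k, ∀ e ∈ E k, e.1 ≠ e.2)
    (htmono : StrictMono t) (htℓ : ∀ m, t (m + 1) - t m ≤ ℓ)
    (hsc : ∀ m, StronglyConnected ((Finset.Ico (t m) (t (m + 1))).biUnion E))
    (hu : ∀ k, u (k + 1) = (degWeights (E k)).mulVec (u k))
    (m : ℕ) {c : ℝ} (hc : 0 ≤ c) {lstar : Fin n} (hl : c ≤ u (t m) lstar)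
    (hpos : ∀ j, 0 ≤ u (t m) j) :
    ∀ j, (1 / n : ℝ) ^ (ℓ * (n - 1)) * c ≤ u (t (m + (n - 1))) j := by
  have claim : ∀ i : ℕ, ∃ S : Finset (Fin n), S.Nonempty ∧ min (i + 1) n ≤ S.card ∧
      ∀ a ∈ S, (1 / n : ℝ) ^ (ℓ * i) * c ≤ u (t (m + i)) a := by
    intro i
    induction i with
    | zero =>
      refine ⟨{lstar}, Finset.singleton_nonempty _, by simp, ?_⟩
      intro a ha
      rw [Finset.mem_singleton] at ha
      subst ha
      simpa using hl
    | succ i ih =>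
      obtain ⟨S, hSne, hScard, hS⟩ := ih
      have hpos' : ∀ j, 0 ≤ u (t (m + i)) j :=
        nonneg_propagate hu (htmono.le_iff_le.mpr (Nat.le_add_right m i)) hpos
      obtain ⟨S', hS'ne, hS'card, hS'⟩ := window_grow hns htmono htℓ hsc hu (m + i)
        (by positivity) hSne hS hpos'
      refine ⟨S', hS'ne, by omega, ?_⟩
      intro a ha
      have := hS' a ha
      rw [show ℓ * (i + 1) = ℓ + ℓ * i by ring, pow_add, mul_assoc]
      exact this
  obtain ⟨S, _, hScard, hS⟩ := claim (n - 1)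
  have hcard : S = Finset.univ := by
    apply Finset.eq_univ_of_card
    have := S.card_le_univ
    simp only [Finset.card_univ, Fintype.card_fin] at this ⊢
    omega
  intro j
  exact hS j (hcard ▸ Finset.mem_univ j)

end window

lemma sum_mulVec {n : ℕ} (E : Finset (Fin n × Fin n)) (hns : ∀ e ∈ E, e.1 ≠ e.2)
    (v : Fin n → ℝ) : ∑ j, ((degWeights E).mulVec v) j = ∑ j, v j := by
  simp only [Matrix.mulVec, dotProduct]
  rw [Finset.sum_comm]
  refine Finset.sum_congr rfl fun l _ => ?_
  rw [← Finset.sum_mul, colsum E hns l, one_mul]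

theorem statement5 (n : ℕ) (hn : 2 ≤ n)
    (E : ℕ → Finset (Fin n × Fin n))
    (hnoself : ∀ k, ∀ e ∈ E k, e.1 ≠ e.2)
    (ℓ : ℕ) (hℓ : 1 ≤ ℓ)
    (t : ℕ → ℕ) (ht0 : t 0 = 0) (htmono : StrictMono t)
    (htℓ : ∀ m, t (m + 1) - t m ≤ ℓ)
    (hsc : ∀ m, StronglyConnected ((Finset.Ico (t m) (t (m + 1))).biUnion E))
    (y z : ℕ → Fin n → ℝ) (y0 : Fin n → ℝ)
    (hy0 : y 0 = y0) (hz0 : ∀ j, z 0 j = 1)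
    (hy : ∀ k, y (k + 1) = (degWeights (E k)).mulVec (y k))
    (hz : ∀ k, z (k + 1) = (degWeights (E k)).mulVec (z k)) :
    (∀ k j, 0 < z k j) ∧
      ∀ j, Tendsto (fun k => y k j / z k j) atTop (nhds ((∑ l, y0 l) / (n : ℝ))) := by
  haveI : NeZero n := ⟨by omega⟩
  have hne : (Finset.univ : Finset (Fin n)).Nonempty := Finset.univ_nonempty
  have hnR : (0 : ℝ) < n := by positivity
  set q : ℝ := 1 / n with hqdef
  have hq0 : 0 < q := by positivity
  have hq1 : q ≤ 1 := by
    rw [hqdef, div_le_one hnR]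
    exact_mod_cast Nat.one_le_iff_ne_zero.mpr (by omega)
  -- positivity of z
  have hzpos : ∀ k j, 0 < z k j := by
    intro k
    induction k with
    | zero => intro j; rw [hz0]; norm_num
    | succ k ih =>
      intro j
      have hnn : ∀ j', 0 ≤ z k j' := fun j' => (ih j').le
      have h1 : q * z k j ≤ z (k + 1) j := step_ge hnoself hz k hnn (Or.inl rfl)
      have : 0 < q * z k j := mul_pos hq0 (ih j)
      linarith
  have hznn : ∀ k j, 0 ≤ z k j := fun k j => (hzpos k j).le
  -- sum conservation
  have hzsum : ∀ k, ∑ j, z k j = n := by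
    intro k
    induction k with
    | zero => simp [hz0]
    | succ k ih => rw [hz k, sum_mulVec _ (hnoself k), ih]
  have hysum : ∀ k, ∑ j, y k j = ∑ l, y0 l := by
    intro k
    induction k with
    | zero => rw [hy0]
    | succ k ih => rw [hy k, sum_mulVec _ (hnoself k), ih]
  -- upper bound for z
  have hzub : ∀ k j, z k j ≤ n := by
    intro k j
    calc z k j ≤ ∑ j', z k j' :=
          Finset.single_le_sum (fun j' _ => hznn k j') (Finset.mem_univ j)
      _ = n := hzsum k
  -- every k lies in a window
  have hwin : ∀ k, ∃ m, t m ≤ k ∧ k < t (m + 1) := by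
    intro k
    have hbig : ∃ i, k < t i := ⟨k + 1, lt_of_lt_of_le (Nat.lt_succ_self k) (htmono.le_apply)⟩
    have h0 : k < t (Nat.find hbig) := Nat.find_spec hbig
    have hi0 : Nat.find hbig ≠ 0 := by
      intro h
      rw [h, ht0] at h0
      omega
    refine ⟨Nat.find hbig - 1, ?_, ?_⟩
    · by_contra h
      push_neg at h
      exact Nat.find_min hbig (Nat.sub_lt (Nat.pos_of_ne_zero hi0) one_pos) h
    · rw [Nat.sub_add_cancel (Nat.one_le_iff_ne_zero.mpr hi0)]
      exact h0
  -- t m ≤ ℓ * m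
  have htub : ∀ m, t m ≤ ℓ * m := by
    intro m
    induction m with
    | zero => simp [ht0]
    | succ m ih =>
      have h1 := htℓ m
      have h2 := htmono (Nat.lt_succ_self m)
      have : ℓ * (m + 1) = ℓ * m + ℓ := by ring
      omega
  -- uniform lower bound for z
  have hzlb : ∀ k j, q ^ (ℓ * n) ≤ z k j := by
    intro k j
    obtain ⟨m, hm1, hm2⟩ := hwin k
    have claim1 : ∀ j', q ^ (ℓ * (n - 1)) ≤ z (t m) j' := by
      intro j'
      by_cases hmn : n - 1 ≤ m
      · obtain ⟨lstar, _, hlstar⟩ := Finset.exists_le_of_sum_le hne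
          (le_of_eq (by rw [hzsum (t (m - (n - 1)))]; simp) :
            ∑ _j : Fin n, (1 : ℝ) ≤ ∑ j', z (t (m - (n - 1))) j')
        have := mixing hn hnoself htmono htℓ hsc hz (m - (n - 1)) zero_le_one hlstar
          (fun j'' => hznn _ j'') j'
        rw [Nat.sub_add_cancel hmn, mul_one] at this
        exact this
      · have h1 : q ^ (t m - 0) * z 0 j' ≤ z (t m) j' :=
          diag_pow' hnoself hz (Nat.zero_le _) (fun j'' => by rw [hz0]; norm_num) j'
        rw [hz0, mul_one, Nat.sub_zero] at h1
        have h2 : t m ≤ ℓ * (n - 1) := by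
          have h2a := htub m
          have h2b : ℓ * m ≤ ℓ * (n - 1) := Nat.mul_le_mul_left ℓ (by omega)
          omega
        calc q ^ (ℓ * (n - 1)) ≤ q ^ (t m) := pow_le_pow_of_le_one hq0.le hq1 h2
          _ ≤ z (t m) j' := h1
    have h3 : q ^ (k - t m) * z (t m) j ≤ z k j :=
      diag_pow' hnoself hz hm1 (fun j'' => hznn _ j'') j
    have h4 : k - t m ≤ ℓ := by
      have := htℓ m
      omega
    have h5 : q ^ ℓ ≤ q ^ (k - t m) := pow_le_pow_of_le_one hq0.le hq1 h4
    have hexp : ℓ * n = ℓ + ℓ * (n - 1) := by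
      obtain ⟨d, rfl⟩ : ∃ d, n = d + 1 := ⟨n - 1, by omega⟩
      rw [Nat.mul_succ]
      simp only [Nat.add_sub_cancel]
      omega
    calc q ^ (ℓ * n) = q ^ ℓ * q ^ (ℓ * (n - 1)) := by rw [hexp, pow_add]
      _ ≤ q ^ (k - t m) * z (t m) j := by
          apply mul_le_mul h5 (claim1 j) (by positivity) (by positivity)
      _ ≤ z k j := h3
  set Mx : ℕ → ℝ := fun k => Finset.univ.sup' hne (fun j => y k j / z k j) with hMxdef
  set mn : ℕ → ℝ := fun k => Finset.univ.inf' hne (fun j => y k j / z k j) with hmndef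
  have hMle : ∀ k j, y k j / z k j ≤ Mx k := fun k j =>
    Finset.le_sup' (fun j' => y k j' / z k j') (Finset.mem_univ j)
  have hmge : ∀ k j, mn k ≤ y k j / z k j := fun k j =>
    Finset.inf'_le (fun j' => y k j' / z k j') (Finset.mem_univ j)
  have hMle' : ∀ k j, y k j ≤ Mx k * z k j := fun k j => by
    have := hMle k j
    rw [div_le_iff₀ (hzpos k j)] at this
    linarith
  have hmge' : ∀ k j, mn k * z k j ≤ y k j := fun k j => by
    have := hmge k j
    rw [le_div_iff₀ (hzpos k j)] at this
    linarith
  have hMstep : ∀ k, Mx (k + 1) ≤ Mx k := by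
    intro k
    apply Finset.sup'_le
    intro j _
    rw [div_le_iff₀ (hzpos (k + 1) j)]
    rw [hy k, hz k]
    simp only [Matrix.mulVec, dotProduct, Finset.mul_sum]
    apply Finset.sum_le_sum
    intro l _
    calc degWeights (E k) j l * y k l ≤ degWeights (E k) j l * (Mx k * z k l) :=
          mul_le_mul_of_nonneg_left (hMle' k l) (entry_nonneg _ _ _)
      _ = Mx k * (degWeights (E k) j l * z k l) := by ring
  have hmstep : ∀ k, mn k ≤ mn (k + 1) := by
    intro k
    apply Finset.le_inf'
    intro j _
    rw [le_div_iff₀ (hzpos (k + 1) j)]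
    rw [hy k, hz k]
    simp only [Matrix.mulVec, dotProduct, Finset.mul_sum]
    apply Finset.sum_le_sum
    intro l _
    calc mn k * (degWeights (E k) j l * z k l)
        = degWeights (E k) j l * (mn k * z k l) := by ring
      _ ≤ degWeights (E k) j l * y k l :=
          mul_le_mul_of_nonneg_left (hmge' k l) (entry_nonneg _ _ _)
  have hMmono : ∀ a b : ℕ, a ≤ b → Mx b ≤ Mx a := by
    intro a b hab
    induction b, hab using Nat.le_induction with
    | base => exact le_refl _
    | succ b _ ih => exact (hMstep b).trans ih
  have hmmono : ∀ a b : ℕ, a ≤ b → mn a ≤ mn b := by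
    intro a b hab
    induction b, hab using Nat.le_induction with
    | base => exact le_refl _
    | succ b _ ih => exact ih.trans (hmstep b)
  have hsp : ∀ k, 0 ≤ Mx k - mn k := by
    intro k
    have j0 : Fin n := ⟨0, by omega⟩
    have := (hmge k j0).trans (hMle k j0)
    linarith
  set η : ℝ := q ^ (ℓ * (n - 1)) * q ^ (ℓ * n) / n with hηdef
  have hη0 : 0 < η := by positivity
  have hη2 : 2 * η ≤ 1 := by
    have h1 : q ^ (ℓ * (n - 1)) ≤ 1 := pow_le_one₀ hq0.le hq1
    have h2 : q ^ (ℓ * n) ≤ 1 := pow_le_one₀ hq0.le hq1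
    have h3 : q ^ (ℓ * (n - 1)) * q ^ (ℓ * n) ≤ 1 :=
      mul_le_one₀ h1 (by positivity) h2
    have h4 : η ≤ 1 / n := by
      rw [hηdef]
      exact div_le_div_of_nonneg_right h3 hnR.le
    have h5 : (1 : ℝ) / n ≤ 1 / 2 := by
      apply one_div_le_one_div_of_le
      · norm_num
      · exact_mod_cast hn
    linarith
  have hkey : ∀ m, mn (t m) + η * (Mx (t m) - mn (t m)) ≤ mn (t (m + (n - 1))) ∧
      Mx (t (m + (n - 1))) ≤ Mx (t m) - η * (Mx (t m) - mn (t m)) := by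
    intro m
    have hc0nn : 0 ≤ Mx (t m) - mn (t m) := hsp _
    constructor
    · -- min part
      set u : ℕ → Fin n → ℝ := fun k j => y k j - mn (t m) * z k j with hudef
      have hu : ∀ k, u (k + 1) = (degWeights (E k)).mulVec (u k) := by
        intro k
        funext j
        show y (k + 1) j - mn (t m) * z (k + 1) j = _
        rw [hy k, hz k]
        simp only [Matrix.mulVec, dotProduct, Finset.mul_sum, ← Finset.sum_sub_distrib]
        exact Finset.sum_congr rfl fun l _ => by show _ = _ * (y k l - mn (t m) * z k l); ring
      have hupos : ∀ j, 0 ≤ u (t m) j := fun j => by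
        have := hmge' (t m) j
        show 0 ≤ y (t m) j - mn (t m) * z (t m) j
        linarith
      obtain ⟨lstar, _, hls⟩ := Finset.exists_mem_eq_sup' hne (fun j => y (t m) j / z (t m) j)
      have hul : (Mx (t m) - mn (t m)) * q ^ (ℓ * n) ≤ u (t m) lstar := by
        have h1 : u (t m) lstar = (y (t m) lstar / z (t m) lstar - mn (t m)) * z (t m) lstar := by
          rw [sub_mul, div_mul_cancel₀ _ (hzpos (t m) lstar).ne']
        have h2 : Mx (t m) = y (t m) lstar / z (t m) lstar := hls
        rw [h1, ← h2]
        exact mul_le_mul_of_nonneg_left (hzlb (t m) lstar) hc0nn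
      have hmix := mixing hn hnoself htmono htℓ hsc hu m (by positivity) hul hupos
      apply Finset.le_inf'
      intro j _
      have h2 := hmix j
      have hKnn : 0 ≤ u (t (m + (n - 1))) j := le_trans (by positivity) h2
      have hzK := hzpos (t (m + (n - 1))) j
      have hinv : (1 : ℝ) / n ≤ 1 / z (t (m + (n - 1))) j :=
        one_div_le_one_div_of_le hzK (hzub _ j)
      have h3 : η * (Mx (t m) - mn (t m)) ≤ u (t (m + (n - 1))) j / z (t (m + (n - 1))) j := by
        calc η * (Mx (t m) - mn (t m))
            = (q ^ (ℓ * (n - 1)) * ((Mx (t m) - mn (t m)) * q ^ (ℓ * n))) * (1 / n) := by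
              rw [hηdef]; ring
          _ ≤ u (t (m + (n - 1))) j * (1 / n) :=
              mul_le_mul_of_nonneg_right h2 (by positivity)
          _ ≤ u (t (m + (n - 1))) j * (1 / z (t (m + (n - 1))) j) :=
              mul_le_mul_of_nonneg_left hinv hKnn
          _ = u (t (m + (n - 1))) j / z (t (m + (n - 1))) j := by ring
      have h4 : y (t (m + (n - 1))) j / z (t (m + (n - 1))) j
          = mn (t m) + u (t (m + (n - 1))) j / z (t (m + (n - 1))) j := by
        show _ = mn (t m) + (y (t (m + (n - 1))) j - mn (t m) * z (t (m + (n - 1))) j) / _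
        field_simp
        ring
      rw [h4]
      linarith
    · -- max part
      set u : ℕ → Fin n → ℝ := fun k j => Mx (t m) * z k j - y k j with hudef
      have hu : ∀ k, u (k + 1) = (degWeights (E k)).mulVec (u k) := by
        intro k
        funext j
        show Mx (t m) * z (k + 1) j - y (k + 1) j = _
        rw [hy k, hz k]
        simp only [Matrix.mulVec, dotProduct, Finset.mul_sum, ← Finset.sum_sub_distrib]
        exact Finset.sum_congr rfl fun l _ => by show _ = _ * (Mx (t m) * z k l - y k l); ring
      have hupos : ∀ j, 0 ≤ u (t m) j := fun j => by
        have := hMle' (t m) j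
        show 0 ≤ Mx (t m) * z (t m) j - y (t m) j
        linarith
      obtain ⟨lstar, _, hls⟩ := Finset.exists_mem_eq_inf' hne (fun j => y (t m) j / z (t m) j)
      have hul : (Mx (t m) - mn (t m)) * q ^ (ℓ * n) ≤ u (t m) lstar := by
        have h1 : u (t m) lstar = (Mx (t m) - y (t m) lstar / z (t m) lstar) * z (t m) lstar := by
          rw [sub_mul, div_mul_cancel₀ _ (hzpos (t m) lstar).ne']
        have h2 : mn (t m) = y (t m) lstar / z (t m) lstar := hls
        rw [h1, ← h2]
        exact mul_le_mul_of_nonneg_left (hzlb (t m) lstar) hc0nn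
      have hmix := mixing hn hnoself htmono htℓ hsc hu m (by positivity) hul hupos
      apply Finset.sup'_le
      intro j _
      have h2 := hmix j
      have hKnn : 0 ≤ u (t (m + (n - 1))) j := le_trans (by positivity) h2
      have hzK := hzpos (t (m + (n - 1))) j
      have hinv : (1 : ℝ) / n ≤ 1 / z (t (m + (n - 1))) j :=
        one_div_le_one_div_of_le hzK (hzub _ j)
      have h3 : η * (Mx (t m) - mn (t m)) ≤ u (t (m + (n - 1))) j / z (t (m + (n - 1))) j := by
        calc η * (Mx (t m) - mn (t m))
            = (q ^ (ℓ * (n - 1)) * ((Mx (t m) - mn (t m)) * q ^ (ℓ * n))) * (1 / n) := by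
              rw [hηdef]; ring
          _ ≤ u (t (m + (n - 1))) j * (1 / n) :=
              mul_le_mul_of_nonneg_right h2 (by positivity)
          _ ≤ u (t (m + (n - 1))) j * (1 / z (t (m + (n - 1))) j) :=
              mul_le_mul_of_nonneg_left hinv hKnn
          _ = u (t (m + (n - 1))) j / z (t (m + (n - 1))) j := by ring
      have h4 : y (t (m + (n - 1))) j / z (t (m + (n - 1))) j
          = Mx (t m) - u (t (m + (n - 1))) j / z (t (m + (n - 1))) j := by
        show _ = Mx (t m) - (Mx (t m) * z (t (m + (n - 1))) j - y (t (m + (n - 1))) j) / _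
        field_simp
        ring
      rw [h4]
      linarith
  have hdecay : ∀ s : ℕ, Mx (t ((n - 1) * s)) - mn (t ((n - 1) * s)) ≤
      (1 - 2 * η) ^ s * (Mx 0 - mn 0) := by
    intro s
    induction s with
    | zero => simp [ht0]
    | succ s ih =>
      obtain ⟨ha, hb⟩ := hkey ((n - 1) * s)
      have hrw : (n - 1) * (s + 1) = (n - 1) * s + (n - 1) := by ring
      rw [hrw]
      have h1 : Mx (t ((n - 1) * s + (n - 1))) - mn (t ((n - 1) * s + (n - 1))) ≤
          (1 - 2 * η) * (Mx (t ((n - 1) * s)) - mn (t ((n - 1) * s))) := by nlinarith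
      have h2 : (0:ℝ) ≤ 1 - 2 * η := by linarith
      calc Mx (t ((n - 1) * s + (n - 1))) - mn (t ((n - 1) * s + (n - 1)))
          ≤ (1 - 2 * η) * (Mx (t ((n - 1) * s)) - mn (t ((n - 1) * s))) := h1
        _ ≤ (1 - 2 * η) * ((1 - 2 * η) ^ s * (Mx 0 - mn 0)) :=
            mul_le_mul_of_nonneg_left ih h2
        _ = (1 - 2 * η) ^ (s + 1) * (Mx 0 - mn 0) := by ring
  have hT1 : ∀ k, mn k ≤ (∑ l, y0 l) / n ∧ (∑ l, y0 l) / n ≤ Mx k := by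
    intro k
    constructor
    · rw [le_div_iff₀ hnR]
      calc mn k * n = mn k * (∑ j', z k j') := by rw [hzsum k]
        _ = ∑ j', mn k * z k j' := by rw [Finset.mul_sum]
        _ ≤ ∑ j', y k j' := Finset.sum_le_sum fun j' _ => hmge' k j'
        _ = ∑ l, y0 l := hysum k
    · rw [div_le_iff₀ hnR]
      calc ∑ l, y0 l = ∑ j', y k j' := (hysum k).symm
        _ ≤ ∑ j', Mx k * z k j' := Finset.sum_le_sum fun j' _ => hMle' k j'
        _ = Mx k * (∑ j', z k j') := by rw [Finset.mul_sum]
        _ = Mx k * n := by rw [hzsum k]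
  refine ⟨hzpos, ?_⟩
  intro j
  rw [Metric.tendsto_atTop]
  intro ε hε
  have htend : Tendsto (fun s : ℕ => (1 - 2 * η) ^ s * (Mx 0 - mn 0)) atTop (nhds 0) := by
    have h := (tendsto_pow_atTop_nhds_zero_of_lt_one (by linarith : (0:ℝ) ≤ 1 - 2 * η)
      (by linarith)).mul_const (Mx 0 - mn 0)
    simpa using h
  obtain ⟨s0, hs0⟩ := (htend.eventually_lt_const hε).exists
  refine ⟨t ((n - 1) * s0), ?_⟩
  intro k hk
  have hsk : Mx k - mn k ≤ (1 - 2 * η) ^ s0 * (Mx 0 - mn 0) := by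
    have h1 := hMmono _ _ hk
    have h2 := hmmono _ _ hk
    have h3 := hdecay s0
    linarith
  rw [Real.dist_eq]
  have h5 := hMle k j
  have h6 := hmge k j
  obtain ⟨h7, h8⟩ := hT1 k
  have habs : |y k j / z k j - (∑ l, y0 l) / n| ≤ Mx k - mn k := by
    rw [abs_sub_le_iff]
    constructor <;> linarith
  linarith
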